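/- Let X be a set and f, g : X → ℝ≥0 bounded functions such that for every ε > 0 there exists δ > 0 with: for all x ∈ X, f(x) ≤ δ implies g(x) ≤ ε. Then there exists a continuous function α : ℝ≥0 → ℝ≥0 with α(0) = 0 such that g(x) ≤ α(f(x)) for all x ∈ X. -/

import Mathlib

/-- if `f, g : X → ℝ≥0` are bounded functions such that for every `ε > 0`
there is `δ > 0` with `f x ≤ δ → g x ≤ ε`, then there is a continuous `α : ℝ≥0 → ℝ≥0`
with `α 0 = 0` and `g x ≤ α (f x)` for all `x`. -/
theorem stmt_10 {X : Type*} (f g : X → NNReal)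
    (hf : ∃ C, ∀ x, f x ≤ C) (hg : ∃ C, ∀ x, g x ≤ C)
    (h : ∀ ε : NNReal, 0 < ε → ∃ δ : NNReal, 0 < δ ∧ ∀ x, f x ≤ δ → g x ≤ ε) :
    ∃ α : NNReal → NNReal, Continuous α ∧ α 0 = 0 ∧ ∀ x, g x ≤ α (f x) := by
  classical
  obtain ⟨C, hC⟩ := hg
  have : Nonempty {ε : NNReal // 0 < ε} := ⟨⟨1, one_pos⟩⟩
  choose δ hδpos hδ using fun i : {ε : NNReal // 0 < ε} => h i.1 i.2
  set F : {ε : NNReal // 0 < ε} → ℝ → ℝ :=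
    fun i t => (i.1 : ℝ) + ((C : ℝ) / (δ i : ℝ)) * t with hFdef
  have hδpos' : ∀ i, (0 : ℝ) < (δ i : ℝ) := fun i => by exact_mod_cast hδpos i
  have hFcont : ∀ i, Continuous (F i) := fun i => by fun_prop
  have hFnn : ∀ i, ∀ t : ℝ, 0 ≤ t → 0 ≤ F i t := fun i t ht => by
    have : (0 : ℝ) ≤ (C : ℝ) / (δ i : ℝ) := div_nonneg C.coe_nonneg (hδpos' i).le
    positivity
  set A : ℝ → ℝ := fun t => ⨅ i, F i t with hAdef
  have hbdd : ∀ t : ℝ, 0 ≤ t → BddBelow (Set.range fun i => F i t) := fun t ht =>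
    ⟨0, by rintro _ ⟨i, rfl⟩; exact hFnn i t ht⟩
  have hAnn : ∀ t, 0 ≤ t → 0 ≤ A t := fun t ht => le_ciInf fun i => hFnn i t ht
  have hAle : ∀ i t, 0 ≤ t → A t ≤ F i t := fun i t ht => ciInf_le (hbdd t ht) i
  -- concavity
  have hconc : ConcaveOn ℝ (Set.Ici (0 : ℝ)) A := by
    refine ⟨convex_Ici 0, fun x hx y hy a b ha hb hab => ?_⟩
    refine le_ciInf fun i => ?_
    have hx' : (0 : ℝ) ≤ x := hx
    have hy' : (0 : ℝ) ≤ y := hy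
    have h1 : a • A x ≤ a • F i x := smul_le_smul_of_nonneg_left (hAle i x hx') ha
    have h2 : b • A y ≤ b • F i y := smul_le_smul_of_nonneg_left (hAle i y hy') hb
    have heq : F i (a • x + b • y) = a • F i x + b • F i y := by
      simp only [hFdef, smul_eq_mul]
      linear_combination (-(i.1 : ℝ)) * hab
    rw [heq]
    exact add_le_add h1 h2
  -- A 0 = 0
  have hA0 : A 0 = 0 := by
    refine le_antisymm ?_ (hAnn 0 le_rfl)
    by_contra hlt
    push_neg at hlt
    set i : {ε : NNReal // 0 < ε} :=
      ⟨Real.toNNReal (A 0 / 2), by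
        simp [Real.toNNReal_pos]; linarith⟩ with hi
    have : A 0 ≤ F i 0 := hAle i 0 le_rfl
    have hF0 : F i 0 = (i.1 : ℝ) := by simp [hFdef]
    have hcoe : (i.1 : ℝ) = A 0 / 2 := by
      simp [hi, Real.coe_toNNReal _ (by linarith : (0:ℝ) ≤ A 0 / 2)]
    rw [hF0, hcoe] at this
    linarith
  -- continuity at 0 within Ici 0
  have hcont0 : ContinuousWithinAt A (Set.Ici (0 : ℝ)) 0 := by
    rw [ContinuousWithinAt, hA0]
    rw [tendsto_order]
    constructor
    · intro a ha
      filter_upwards [self_mem_nhdsWithin] with t ht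
      exact lt_of_lt_of_le ha (hAnn t ht)
    · intro b hb
      set i : {ε : NNReal // 0 < ε} :=
        ⟨Real.toNNReal (b / 2), by simp [Real.toNNReal_pos]; linarith⟩ with hi
      have hopen : {t : ℝ | F i t < b} ∈ nhds (0 : ℝ) := by
        refine (isOpen_lt (hFcont i) continuous_const).mem_nhds ?_
        have : F i 0 = (i.1 : ℝ) := by simp [hFdef]
        have hcoe : (i.1 : ℝ) = b / 2 := by
          simp [hi, Real.coe_toNNReal _ (by linarith : (0:ℝ) ≤ b / 2)]
        simp only [Set.mem_setOf_eq, this, hcoe]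
        linarith
      filter_upwards [nhdsWithin_le_nhds hopen, self_mem_nhdsWithin] with t h1 h2
      exact lt_of_le_of_lt (hAle i t h2) h1
  -- continuity on Ici 0
  have hcont : ContinuousOn A (Set.Ici (0 : ℝ)) := by
    intro t ht
    rcases eq_or_lt_of_le (show (0:ℝ) ≤ t from ht) with rfl | ht'
    · exact hcont0
    · have h1 : ContinuousOn A (Set.Ioi (0 : ℝ)) := by
        have := hconc.continuousOn_interior
        rwa [interior_Ici] at this
      exact (h1.continuousAt (Ioi_mem_nhds ht')).continuousWithinAt
  -- the majorization
  have hmaj : ∀ x, (g x : ℝ) ≤ A (f x : ℝ) := by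
    intro x
    refine le_ciInf fun i => ?_
    by_cases hcase : f x ≤ δ i
    · have := hδ i x hcase
      have h1 : (g x : ℝ) ≤ (i.1 : ℝ) := by exact_mod_cast this
      have h2 : (0 : ℝ) ≤ ((C : ℝ) / (δ i : ℝ)) * (f x : ℝ) :=
        mul_nonneg (div_nonneg C.coe_nonneg (hδpos' i).le) (f x).coe_nonneg
      simp only [hFdef]; linarith
    · push_neg at hcase
      have hlt : (δ i : ℝ) < (f x : ℝ) := by exact_mod_cast hcase
      have h1 : (g x : ℝ) ≤ (C : ℝ) := by exact_mod_cast hC x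
      have h2 : (C : ℝ) ≤ ((C : ℝ) / (δ i : ℝ)) * (f x : ℝ) := by
        rw [div_mul_eq_mul_div, le_div_iff₀ (hδpos' i)]
        exact mul_le_mul_of_nonneg_left hlt.le C.coe_nonneg
      have h3 : (0 : ℝ) ≤ (i.1 : ℝ) := i.1.coe_nonneg
      simp only [hFdef]; linarith
  -- assemble
  refine ⟨fun t => (A (t : ℝ)).toNNReal, ?_, ?_, ?_⟩
  · exact continuous_real_toNNReal.comp
      (hcont.comp_continuous NNReal.continuous_coe fun x => x.coe_nonneg)
  · simp [hA0]
  · intro x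
    rw [Real.le_toNNReal_iff_coe_le (hAnn _ (f x).coe_nonneg)]
    exact hmaj x
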